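/- Let G be a finitely generated group, p a prime, k a nonnegative integer, and x ∈ G. Then RG_p(G/⟨⟨x^{p^k}⟩⟩) ≥ RG_p(G) - 1/p^k, where ⟨⟨x^{p^k}⟩⟩ is the normal closure of x^{p^k} in G. -/

import Mathlib

/-- `dGen G` is the minimal number of generators of the group `G`. -/
noncomputable def dGen (G : Type*) [Group G] : ℕ :=
  sInf {n : ℕ | ∃ S : Finset G, S.card = n ∧ Subgroup.closure (S : Set G) = ⊤}

/-- The rank gradient of `G`. -/
noncomputable def rankGradient (G : Type*) [Group G] : ℝ :=
  sInf {r : ℝ | ∃ H : Subgroup G, H.index ≠ 0 ∧ r = ((dGen H : ℝ) - 1) / (H.index : ℝ)}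

open scoped commutatorElement

/-- The subgroup `[G,G]G^p` of `G` (as a normal closure of its generators). -/
def pCommPow (p : ℕ) (G : Type*) [Group G] : Subgroup G :=
  Subgroup.normalClosure ({x | ∃ a b : G, x = ⁅a, b⁆} ∪ {x | ∃ g : G, x = g ^ p})

instance pCommPow_normal (p : ℕ) (G : Type*) [Group G] : (pCommPow p G).Normal :=
  Subgroup.normalClosure_normal

/-- `d_p(G) = d(G/([G,G]G^p))`. -/
noncomputable def dp (p : ℕ) (G : Type*) [Group G] : ℕ :=
  dGen (G ⧸ pCommPow p G)

/-- The `p`-gradient of `G`. -/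
noncomputable def pGradient (p : ℕ) (G : Type*) [Group G] : ℝ :=
  sInf {r : ℝ | ∃ H : Subgroup G, H.Normal ∧ (∃ k : ℕ, H.index = p ^ k) ∧
    r = ((dp p H : ℝ) - 1) / (H.index : ℝ)}

/-- The `p`-residual: intersection of all normal subgroups of `p`-power index. -/
def pResidual (p : ℕ) (G : Type*) [Group G] : Subgroup G :=
  ⨅ H ∈ {H : Subgroup G | H.Normal ∧ ∃ k : ℕ, H.index = p ^ k}, H

instance pResidual_normal (p : ℕ) (G : Type*) [Group G] : (pResidual p G).Normal := by
  constructor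
  intro n hn g
  simp only [pResidual, Subgroup.mem_iInf] at hn ⊢
  intro H hH
  exact hH.1.conj_mem n (hn H hH) g


section Aux
variable {A B : Type*} [Group A] [Group B]

lemma dGen_le_card (S : Finset A) (h : Subgroup.closure (S : Set A) = ⊤) :
    dGen A ≤ S.card :=
  Nat.sInf_le ⟨S, rfl, h⟩

lemma exists_dGen_finset (A : Type*) [Group A] [Group.FG A] :
    ∃ S : Finset A, S.card = dGen A ∧ Subgroup.closure (S : Set A) = ⊤ := by
  have hne : {n : ℕ | ∃ S : Finset A, S.card = n ∧
      Subgroup.closure (S : Set A) = ⊤}.Nonempty := by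
    obtain ⟨n, S, h1, h2⟩ := Group.fg_iff'.mp ‹Group.FG A›
    exact ⟨n, S, h1, h2⟩
  exact Nat.sInf_mem hne

lemma exists_image_gen (e : A ≃* B) (S : Finset A)
    (h : Subgroup.closure (S : Set A) = ⊤) :
    ∃ T : Finset B, T.card = S.card ∧ Subgroup.closure (T : Set B) = ⊤ := by
  classical
  refine ⟨S.image e, Finset.card_image_of_injective _ e.injective, ?_⟩
  rw [Finset.coe_image]
  have : (⇑e '' (S : Set A)) = ⇑(e : A →* B) '' (S : Set A) := rfl
  rw [this, ← MonoidHom.map_closure, h, Subgroup.map_top_of_surjective _ e.surjective]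

lemma dGen_eq_of_mulEquiv (e : A ≃* B) : dGen A = dGen B := by
  unfold dGen
  congr 1
  ext n
  constructor
  · rintro ⟨S, rfl, hS⟩
    obtain ⟨T, hc, hT⟩ := exists_image_gen e S hS
    exact ⟨T, hc, hT⟩
  · rintro ⟨S, rfl, hS⟩
    obtain ⟨T, hc, hT⟩ := exists_image_gen e.symm S hS
    exact ⟨T, hc, hT⟩

lemma map_pCommPow (p : ℕ) (f : A →* B) (hf : Function.Surjective f) :
    (pCommPow p A).map f = pCommPow p B := by
  unfold pCommPow
  rw [Subgroup.map_normalClosure _ _ hf]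
  congr 1
  rw [Set.image_union]
  congr 1
  · ext y
    constructor
    · rintro ⟨_, ⟨a, b, rfl⟩, rfl⟩
      exact ⟨f a, f b, (map_commutatorElement f a b)⟩
    · rintro ⟨a, b, rfl⟩
      obtain ⟨a', rfl⟩ := hf a
      obtain ⟨b', rfl⟩ := hf b
      exact ⟨⁅a', b'⁆, ⟨a', b', rfl⟩, map_commutatorElement f a' b'⟩
  · ext y
    constructor
    · rintro ⟨_, ⟨g, rfl⟩, rfl⟩
      exact ⟨f g, (map_pow f g p)⟩
    · rintro ⟨g, rfl⟩
      obtain ⟨g', rfl⟩ := hf g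
      exact ⟨g' ^ p, ⟨g', rfl⟩, map_pow f g' p⟩

lemma dp_eq_of_mulEquiv (p : ℕ) (e : A ≃* B) : dp p A = dp p B :=
  dGen_eq_of_mulEquiv
    (QuotientGroup.congr _ _ e (map_pCommPow p (e : A →* B) e.surjective))

lemma dGen_le_quotient_add (W : Subgroup A) [W.Normal] [Group.FG (A ⧸ W)]
    (T : Finset A) (hT : Subgroup.closure (T : Set A) = W) :
    dGen A ≤ dGen (A ⧸ W) + T.card := by
  classical
  obtain ⟨Sb, hScard, hSgen⟩ := exists_dGen_finset (A ⧸ W)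
  choose lf hlf using fun q : A ⧸ W => QuotientGroup.mk'_surjective W q
  set S : Finset A := Sb.image lf with hS
  have hCtop : Subgroup.closure ((S ∪ T : Finset A) : Set A) = ⊤ := by
    set C := Subgroup.closure ((S ∪ T : Finset A) : Set A) with hC
    have hWC : W ≤ C := by
      rw [← hT]
      apply Subgroup.closure_mono
      intro t ht
      simp only [Finset.coe_union, Set.mem_union]
      exact Or.inr ht
    rw [Subgroup.eq_top_iff']
    intro v
    have h1 : ((v : A ⧸ W)) ∈ Subgroup.map (QuotientGroup.mk' W) C := by
      have h2 : Subgroup.closure (Sb : Set (A ⧸ W)) ≤ Subgroup.map (QuotientGroup.mk' W) C := by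
        rw [Subgroup.closure_le]
        intro b hb
        exact ⟨lf b, Subgroup.subset_closure (by
          simp only [Finset.coe_union, Set.mem_union, hS]
          exact Or.inl (by simpa using ⟨b, hb, rfl⟩)), hlf b⟩
      exact h2 (hSgen ▸ Subgroup.mem_top _)
    obtain ⟨cc, hcc, hcv⟩ := h1
    have hker : cc⁻¹ * v ∈ W := by
      rw [← QuotientGroup.eq]
      exact hcv
    have hv : v = cc * (cc⁻¹ * v) := by group
    rw [hv]
    exact C.mul_mem hcc (hWC hker)
  calc dGen A ≤ (S ∪ T).card := dGen_le_card _ hCtop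
    _ ≤ S.card + T.card := Finset.card_union_le _ _
    _ ≤ dGen (A ⧸ W) + T.card := by
        have h3 : S.card ≤ Sb.card := Finset.card_image_le
        omega

end Aux

lemma dp_core {G : Type*} [Group G] [Group.FG G] {p : ℕ} (hp : p.Prime) (k n : ℕ) (x : G)
    (H : Subgroup G) [hHn : H.Normal] (hHi : H.index = p ^ n)
    (hNH : Subgroup.normalClosure {x ^ p ^ k} ≤ H) :
    (dp p H : ℝ) ≤
      (dp p (↥H ⧸ (Subgroup.normalClosure {x ^ p ^ k}).subgroupOf H) : ℝ)
        + (p : ℝ) ^ n / (p : ℝ) ^ k := by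
  classical
  have hp0 : (0:ℝ) < (p:ℝ) := by exact_mod_cast hp.pos
  set N := Subgroup.normalClosure ({x ^ p ^ k} : Set G) with hNdef
  haveI hNn : N.Normal := Subgroup.normalClosure_normal
  have hxN : x ^ p ^ k ∈ N := Subgroup.subset_normalClosure rfl
  have hxH : x ^ p ^ k ∈ H := hNH hxN
  have hconj : ∀ g : G, g * x ^ p ^ k * g⁻¹ ∈ H := fun g => hHn.conj_mem _ hxH g
  set M : Subgroup ↥H := N.subgroupOf H with hMdef
  haveI hMn : M.Normal := hNn.comap _
  set W : Subgroup (↥H ⧸ pCommPow p ↥H) := M.map (QuotientGroup.mk' (pCommPow p ↥H))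
    with hWdef
  haveI hWn : W.Normal := hMn.map _ (QuotientGroup.mk'_surjective _)
  haveI : H.FiniteIndex := ⟨by rw [hHi]; exact pow_ne_zero _ hp.ne_zero⟩
  haveI : Group.FG (↥H ⧸ pCommPow p ↥H) :=
    Group.fg_of_surjective (QuotientGroup.mk'_surjective (pCommPow p ↥H))
  haveI : Group.FG ((↥H ⧸ pCommPow p ↥H) ⧸ W) :=
    Group.fg_of_surjective (QuotientGroup.mk'_surjective W)
  -- identification of dp of the quotient
  have hdpq : dp p (↥H ⧸ M) = dGen ((↥H ⧸ pCommPow p ↥H) ⧸ W) := by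
    have hJ1 : (pCommPow p ↥H ⊔ M).map (QuotientGroup.mk' M) = pCommPow p (↥H ⧸ M) := by
      have h1 : M.map (QuotientGroup.mk' M) = ⊥ := by
        rw [eq_bot_iff]
        rintro _ ⟨m, hm, rfl⟩
        simpa [Subgroup.mem_bot, QuotientGroup.eq_one_iff] using hm
      rw [Subgroup.map_sup, h1, sup_bot_eq,
        map_pCommPow p _ (QuotientGroup.mk'_surjective M)]
    have hJ2 : (pCommPow p ↥H ⊔ M).map (QuotientGroup.mk' (pCommPow p ↥H)) = W := by
      have h1 : (pCommPow p ↥H).map (QuotientGroup.mk' (pCommPow p ↥H)) = ⊥ := by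
        rw [eq_bot_iff]
        rintro _ ⟨m, hm, rfl⟩
        simpa [Subgroup.mem_bot, QuotientGroup.eq_one_iff] using hm
      rw [Subgroup.map_sup, h1, bot_sup_eq, hWdef]
    have e1 : (↥H ⧸ M) ⧸ pCommPow p (↥H ⧸ M) ≃* ↥H ⧸ (pCommPow p ↥H ⊔ M) :=
      (QuotientGroup.quotientMulEquivOfEq hJ1.symm).trans
        (QuotientGroup.quotientQuotientEquivQuotient M (pCommPow p ↥H ⊔ M) le_sup_right)
    have e2 : (↥H ⧸ pCommPow p ↥H) ⧸ W ≃* ↥H ⧸ (pCommPow p ↥H ⊔ M) :=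
      (QuotientGroup.quotientMulEquivOfEq hJ2.symm).trans
        (QuotientGroup.quotientQuotientEquivQuotient (pCommPow p ↥H)
          (pCommPow p ↥H ⊔ M) le_sup_left)
    exact (dGen_eq_of_mulEquiv e1).trans (dGen_eq_of_mulEquiv e2).symm
  -- the conjugate generators
  set c : G → (↥H ⧸ pCommPow p ↥H) :=
    fun g => QuotientGroup.mk (⟨g * x ^ p ^ k * g⁻¹, hconj g⟩ : ↥H) with hcdef
  have hL1 : ∀ w z : ↥H,
      (QuotientGroup.mk (w * z * w⁻¹) : ↥H ⧸ pCommPow p ↥H) = QuotientGroup.mk z := by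
    intro w z
    rw [QuotientGroup.eq]
    apply Subgroup.subset_normalClosure
    exact Or.inl ⟨w, z⁻¹, by rw [commutatorElement_def]; group⟩
  have hL2 : ∀ z : ↥H, (QuotientGroup.mk (z ^ p) : ↥H ⧸ pCommPow p ↥H) = 1 := fun z =>
    (QuotientGroup.eq_one_iff _).mpr (Subgroup.subset_normalClosure (Or.inr ⟨z, rfl⟩))
  have hc_mul : ∀ (g : G) (j : ℤ) (h₀ : G), h₀ ∈ H → c (g * x ^ j * h₀) = c g := by
    intro g j h₀ hh₀
    have hwH : (g * x ^ j) * h₀ * (g * x ^ j)⁻¹ ∈ H := hHn.conj_mem _ hh₀ _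
    have hzH : (g * x ^ j) * x ^ p ^ k * (g * x ^ j)⁻¹ ∈ H := hHn.conj_mem _ hxH _
    have key : c (g * x ^ j * h₀) = QuotientGroup.mk
        ((⟨_, hwH⟩ : ↥H) * (⟨_, hzH⟩ : ↥H) * (⟨_, hwH⟩ : ↥H)⁻¹) := by
      apply congrArg QuotientGroup.mk
      apply Subtype.ext
      show (g * x ^ j * h₀) * x ^ p ^ k * (g * x ^ j * h₀)⁻¹ = _
      push_cast
      group
    rw [key, hL1]
    apply congrArg QuotientGroup.mk
    apply Subtype.ext
    show (g * x ^ j) * x ^ p ^ k * (g * x ^ j)⁻¹ = g * x ^ p ^ k * g⁻¹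
    group
  have hc_congr : ∀ g g' : G,
      (QuotientGroup.mk (QuotientGroup.mk g : G ⧸ H) :
        (G ⧸ H) ⧸ Subgroup.zpowers (QuotientGroup.mk x : G ⧸ H)) =
        QuotientGroup.mk (QuotientGroup.mk g') →
      c g = c g' := by
    intro g g' hgg
    rw [QuotientGroup.eq, Subgroup.mem_zpowers_iff] at hgg
    obtain ⟨j, hj⟩ := hgg
    have h2 : (QuotientGroup.mk (g⁻¹ * g') : G ⧸ H) = QuotientGroup.mk (x ^ j) := by
      have h3 : (QuotientGroup.mk (x ^ j) : G ⧸ H)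
          = (QuotientGroup.mk g)⁻¹ * QuotientGroup.mk g' := by
        rw [← hj]
        simp [QuotientGroup.mk_zpow]
      rw [h3]
      simp [QuotientGroup.mk_mul, QuotientGroup.mk_inv]
    have h3 : (x ^ j)⁻¹ * (g⁻¹ * g') ∈ H := QuotientGroup.eq.mp h2.symm
    have h4 : c (g * x ^ j * ((x ^ j)⁻¹ * (g⁻¹ * g'))) = c g := hc_mul g j _ h3
    have h5 : g * x ^ j * ((x ^ j)⁻¹ * (g⁻¹ * g')) = g' := by group
    rw [h5] at h4
    exact h4.symm
  -- range c generates W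
  have hrange_sub : Set.range c ⊆ (W : Set (↥H ⧸ pCommPow p ↥H)) := by
    rintro _ ⟨g, rfl⟩
    exact ⟨⟨g * x ^ p ^ k * g⁻¹, hconj g⟩,
      Subgroup.mem_subgroupOf.mpr (hNn.conj_mem _ hxN g), rfl⟩
  have hWle : W ≤ Subgroup.closure (Set.range c) := by
    set C := Subgroup.closure (Set.range c) with hCdef
    have hτ : ∀ (g : G) (h : ↥H), (QuotientGroup.mk h : ↥H ⧸ pCommPow p ↥H) ∈ C →
        (QuotientGroup.mk (⟨g * ↑h * g⁻¹, hHn.conj_mem _ h.2 g⟩ : ↥H) :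
          ↥H ⧸ pCommPow p ↥H) ∈ C := by
      intro g
      set β : ↥H →* (↥H ⧸ pCommPow p ↥H) := MonoidHom.mk'
        (fun h => QuotientGroup.mk (⟨g * ↑h * g⁻¹, hHn.conj_mem _ h.2 g⟩ : ↥H))
        (by
          intro h1 h2
          apply congrArg QuotientGroup.mk
          apply Subtype.ext
          push_cast
          group) with hβdef
      have hker : pCommPow p ↥H ≤ β.ker := by
        apply Subgroup.normalClosure_le_normal
        rintro _ (⟨a, b, rfl⟩ | ⟨z, rfl⟩)
        · have hab : (⟨g * ↑(⁅a, b⁆ : ↥H) * g⁻¹, hHn.conj_mem _ (⁅a, b⁆ : ↥H).2 g⟩ : ↥H)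
              = ⁅(⟨g * ↑a * g⁻¹, hHn.conj_mem _ a.2 g⟩ : ↥H),
                 (⟨g * ↑b * g⁻¹, hHn.conj_mem _ b.2 g⟩ : ↥H)⁆ := by
            apply Subtype.ext
            show g * ↑(⁅a, b⁆ : ↥H) * g⁻¹ = _
            rw [commutatorElement_def, commutatorElement_def]
            push_cast
            group
          show β ⁅a, b⁆ = 1
          rw [hβdef]
          show QuotientGroup.mk _ = 1
          rw [hab]
          exact (QuotientGroup.eq_one_iff _).mpr
            (Subgroup.subset_normalClosure (Or.inl ⟨_, _, rfl⟩))
        · have hzp : (⟨g * ↑(z ^ p : ↥H) * g⁻¹, hHn.conj_mem _ (z ^ p : ↥H).2 g⟩ : ↥H)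
              = (⟨g * ↑z * g⁻¹, hHn.conj_mem _ z.2 g⟩ : ↥H) ^ p := by
            apply Subtype.ext
            show g * ↑(z ^ p : ↥H) * g⁻¹ = _
            push_cast
            rw [conj_pow]
          show β (z ^ p) = 1
          rw [hβdef]
          show QuotientGroup.mk _ = 1
          rw [hzp]
          exact hL2 _
      set τ := QuotientGroup.lift (pCommPow p ↥H) β hker with hτdef
      have hτmk : ∀ h : ↥H, τ (QuotientGroup.mk h) = β h := fun h =>
        QuotientGroup.lift_mk' _ _ h
      have hmapτ : Subgroup.map τ C ≤ C := by
        rw [hCdef, MonoidHom.map_closure]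
        apply Subgroup.closure_mono
        rintro _ ⟨_, ⟨g', rfl⟩, rfl⟩
        refine ⟨g * g', ?_⟩
        rw [hcdef]
        show QuotientGroup.mk _ = τ (QuotientGroup.mk _)
        rw [hτmk]
        apply congrArg QuotientGroup.mk
        apply Subtype.ext
        show (g * g') * x ^ p ^ k * (g * g')⁻¹ = g * ((g' * x ^ p ^ k * g'⁻¹)) * g⁻¹
        group
      intro h hh
      have : τ (QuotientGroup.mk h) ∈ C := hmapτ ⟨_, hh, rfl⟩
      rwa [hτmk] at this
    have hUD : ∀ h : ↥H, (↑h ∈ N) → (QuotientGroup.mk h : ↥H ⧸ pCommPow p ↥H) ∈ C := by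
      set D : Subgroup G := (C.comap (QuotientGroup.mk' (pCommPow p ↥H))).map H.subtype
        with hDdef
      have hDn : D.Normal := by
        constructor
        rintro _ ⟨h, hh, rfl⟩ g
        have hmem : g * H.subtype h * g⁻¹ ∈ H := hHn.conj_mem _ h.2 g
        refine ⟨⟨g * H.subtype h * g⁻¹, hmem⟩, ?_, rfl⟩
        rw [SetLike.mem_coe, Subgroup.mem_comap] at hh ⊢
        exact hτ g h hh
      have hxD : x ^ p ^ k ∈ D := by
        refine ⟨⟨x ^ p ^ k, hxH⟩, ?_, rfl⟩
        show (QuotientGroup.mk (⟨x ^ p ^ k, hxH⟩ : ↥H) : ↥H ⧸ pCommPow p ↥H) ∈ C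
        have h1 : c 1 = QuotientGroup.mk (⟨x ^ p ^ k, hxH⟩ : ↥H) := by
          apply congrArg QuotientGroup.mk
          apply Subtype.ext
          show 1 * x ^ p ^ k * 1⁻¹ = x ^ p ^ k
          group
        rw [← h1]
        exact Subgroup.subset_closure ⟨1, rfl⟩
      have hND : N ≤ D := by
        haveI := hDn
        apply Subgroup.normalClosure_le_normal
        intro y hy
        rw [Set.mem_singleton_iff] at hy
        rw [hy]
        exact hxD
      intro h hh
      obtain ⟨u, hu, huh⟩ := hND hh
      have huh' : u = h := Subtype.ext huh
      rw [← huh']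
      exact hu
    rintro _ ⟨h, hh, rfl⟩
    exact hUD h (Subgroup.mem_subgroupOf.mp hh)
  have hWC : Subgroup.closure (Set.range c) = W :=
    le_antisymm ((Subgroup.closure_le W).mpr hrange_sub) hWle
  -- counting
  haveI hQfin : Finite (G ⧸ H) := Nat.finite_of_card_ne_zero
    (by rw [← Subgroup.index_eq_card, hHi]; exact pow_ne_zero _ hp.ne_zero)
  -- main inequality with a generator count
  have hfinal : ∃ t : ℕ, dGen (↥H ⧸ pCommPow p ↥H) ≤ dGen ((↥H ⧸ pCommPow p ↥H) ⧸ W) + t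
      ∧ t * p ^ k ≤ p ^ n := by
    by_cases hA : k ≠ 0 ∧ (QuotientGroup.mk x : G ⧸ H) ^ p ^ (k - 1) = 1
    · obtain ⟨hk0, hxk⟩ := hA
      have hxk1H : x ^ p ^ (k - 1) ∈ H := by
        have h1 : (QuotientGroup.mk (x ^ p ^ (k - 1)) : G ⧸ H) = 1 := by
          rw [QuotientGroup.mk_pow]
          exact hxk
        exact (QuotientGroup.eq_one_iff _).mp h1
      have hcz : ∀ g : G, c g = 1 := by
        intro g
        have hmem : g * x ^ p ^ (k - 1) * g⁻¹ ∈ H := hHn.conj_mem _ hxk1H g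
        have h2 : (⟨g * x ^ p ^ k * g⁻¹, hconj g⟩ : ↥H)
            = (⟨g * x ^ p ^ (k - 1) * g⁻¹, hmem⟩ : ↥H) ^ p := by
          apply Subtype.ext
          show g * x ^ p ^ k * g⁻¹ = (g * x ^ p ^ (k - 1) * g⁻¹) ^ p
          have hpow : p ^ (k - 1) * p = p ^ k := by
            rw [← pow_succ]
            congr 1
            omega
          rw [conj_pow, ← pow_mul, hpow]
        show QuotientGroup.mk _ = 1
        rw [h2]
        exact hL2 _
      have hWbot : W = ⊥ := by
        rw [← hWC, eq_bot_iff]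
        rw [Subgroup.closure_le]
        rintro _ ⟨g, rfl⟩
        rw [SetLike.mem_coe, Subgroup.mem_bot]
        exact hcz g
      refine ⟨0, ?_, by simp⟩
      have := dGen_le_quotient_add W (∅ : Finset _) (by rw [Finset.coe_empty,
        Subgroup.closure_empty, hWbot])
      simpa using this
    · -- order of x in G/H is at least p^k
      have homk : p ^ k ≤ orderOf (QuotientGroup.mk x : G ⧸ H) := by
        have hofin : orderOf (QuotientGroup.mk x : G ⧸ H) ∣ p ^ n := by
          rw [← hHi, Subgroup.index_eq_card]
          exact orderOf_dvd_natCard _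
        obtain ⟨m, hmn, hom⟩ := (Nat.dvd_prime_pow hp).mp hofin
        rw [hom]
        apply Nat.pow_le_pow_right hp.one_le
        by_contra hlt
        push_neg at hlt
        push_neg at hA
        have hk0 : k ≠ 0 := by omega
        apply hA hk0
        apply orderOf_dvd_iff_pow_eq_one.mp
        rw [hom]
        exact pow_dvd_pow p (by omega)
      haveI : Finite ((G ⧸ H) ⧸ Subgroup.zpowers (QuotientGroup.mk x : G ⧸ H)) :=
        Quotient.finite _
      haveI : Fintype ((G ⧸ H) ⧸ Subgroup.zpowers (QuotientGroup.mk x : G ⧸ H)) :=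
        Fintype.ofFinite _
      set cb : ((G ⧸ H) ⧸ Subgroup.zpowers (QuotientGroup.mk x : G ⧸ H)) →
          (↥H ⧸ pCommPow p ↥H) :=
        fun q => c (Quotient.out (Quotient.out q)) with hcbdef
      have houts : ∀ q : (G ⧸ H) ⧸ Subgroup.zpowers (QuotientGroup.mk x : G ⧸ H),
          (QuotientGroup.mk (QuotientGroup.mk (Quotient.out (Quotient.out q)) : G ⧸ H)) = q := by
        intro q
        rw [QuotientGroup.out_eq', QuotientGroup.out_eq']
      have hrange : Set.range c = Set.range cb := by
        ext v
        constructor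
        · rintro ⟨g, rfl⟩
          refine ⟨QuotientGroup.mk (QuotientGroup.mk g), ?_⟩
          rw [hcbdef]
          exact (hc_congr _ _ (by rw [houts])).symm
        · rintro ⟨q, rfl⟩
          exact ⟨Quotient.out (Quotient.out q), rfl⟩
      set T : Finset (↥H ⧸ pCommPow p ↥H) := Finset.image cb Finset.univ with hTdef
      have hTclosure : Subgroup.closure (T : Set (↥H ⧸ pCommPow p ↥H)) = W := by
        rw [hTdef, Finset.coe_image, Finset.coe_univ, Set.image_univ, ← hrange, hWC]
      have hTcard : T.card * p ^ k ≤ p ^ n := by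
        have h1 : T.card ≤ Fintype.card
            ((G ⧸ H) ⧸ Subgroup.zpowers (QuotientGroup.mk x : G ⧸ H)) := by
          rw [hTdef]
          exact Finset.card_image_le.trans (by rw [Finset.card_univ])
        have h2 : Fintype.card ((G ⧸ H) ⧸ Subgroup.zpowers (QuotientGroup.mk x : G ⧸ H))
            = (Subgroup.zpowers (QuotientGroup.mk x : G ⧸ H)).index := by
          rw [Subgroup.index_eq_card, Nat.card_eq_fintype_card]
        have h3 : Nat.card ↥(Subgroup.zpowers (QuotientGroup.mk x : G ⧸ H)) *
            (Subgroup.zpowers (QuotientGroup.mk x : G ⧸ H)).index = p ^ n := by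
          rw [Subgroup.card_mul_index, ← Subgroup.index_eq_card, hHi]
        have h4 : Nat.card ↥(Subgroup.zpowers (QuotientGroup.mk x : G ⧸ H))
            = orderOf (QuotientGroup.mk x : G ⧸ H) := Nat.card_zpowers _
        calc T.card * p ^ k
            ≤ (Subgroup.zpowers (QuotientGroup.mk x : G ⧸ H)).index *
              orderOf (QuotientGroup.mk x : G ⧸ H) :=
              Nat.mul_le_mul (h1.trans h2.le) homk
          _ = p ^ n := by rw [mul_comm, ← h4, h3]
      exact ⟨T.card, dGen_le_quotient_add W T hTclosure, hTcard⟩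
  obtain ⟨t, ht1, ht2⟩ := hfinal
  have hdpH : dp p ↥H = dGen (↥H ⧸ pCommPow p ↥H) := rfl
  have hpk : (0:ℝ) < (p:ℝ) ^ k := pow_pos hp0 k
  have hpn : (0:ℝ) < (p:ℝ) ^ n := pow_pos hp0 n
  have htr : (t : ℝ) ≤ (p:ℝ) ^ n / (p:ℝ) ^ k := by
    rw [le_div_iff₀ hpk]
    exact_mod_cast ht2
  have h1 : (dGen (↥H ⧸ pCommPow p ↥H) : ℝ)
      ≤ (dGen ((↥H ⧸ pCommPow p ↥H) ⧸ W) : ℝ) + t := by exact_mod_cast ht1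
  rw [hdpH, hdpq]
  push_cast
  linarith


/-- `RG_p(G/⟪x^{p^k}⟫) ≥ RG_p(G) - 1/p^k`. -/
theorem pGradient_quotient_lower_bound (G : Type*) [Group G] [Group.FG G]
    (p : ℕ) (hp : p.Prime) (k : ℕ) (x : G) :
    pGradient p (G ⧸ Subgroup.normalClosure {x ^ p ^ k})
      ≥ pGradient p G - 1 / (p : ℝ) ^ k := by
  classical
  set N := Subgroup.normalClosure ({x ^ p ^ k} : Set G) with hNdef
  haveI hNn : N.Normal := Subgroup.normalClosure_normal
  have hp0 : (0:ℝ) < (p:ℝ) := by exact_mod_cast hp.pos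
  have hbdd : BddBelow {r : ℝ | ∃ H : Subgroup G, H.Normal ∧
      (∃ j : ℕ, H.index = p ^ j) ∧ r = ((dp p H : ℝ) - 1) / (H.index : ℝ)} := by
    refine ⟨-1, ?_⟩
    rintro r ⟨H, _, ⟨j, hj⟩, rfl⟩
    have hpos : (0:ℝ) < (H.index : ℝ) := by
      rw [hj]
      push_cast
      positivity
    have h1 : (1:ℝ) ≤ (H.index : ℝ) := by
      have : H.index ≠ 0 := by rw [hj]; exact pow_ne_zero _ hp.ne_zero
      exact_mod_cast Nat.one_le_iff_ne_zero.mpr this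
    rw [le_div_iff₀ hpos]
    nlinarith [Nat.cast_nonneg (α := ℝ) (dp p H)]
  rw [ge_iff_le]
  unfold pGradient
  apply le_csInf
  · exact ⟨((dp p (⊤ : Subgroup (G ⧸ N)) : ℝ) - 1) / (((⊤ : Subgroup (G ⧸ N)).index : ℕ) : ℝ),
      ⊤, inferInstance, ⟨0, by simp⟩, rfl⟩
  · rintro r ⟨K, hKn, ⟨n, hKi⟩, rfl⟩
    set H := K.comap (QuotientGroup.mk' N) with hHdef
    haveI hHn : H.Normal := hKn.comap _
    have hHi : H.index = p ^ n := by
      rw [hHdef, Subgroup.index_comap_of_surjective _ (QuotientGroup.mk'_surjective N), hKi]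
    have hNH : N ≤ H := by
      intro g hg
      show QuotientGroup.mk' N g ∈ K
      have h1 : QuotientGroup.mk' N g = 1 := (QuotientGroup.eq_one_iff g).mpr hg
      rw [h1]
      exact K.one_mem
    set M := N.subgroupOf H with hMdef
    haveI hMn : M.Normal := hNn.comap _
    have hdpK : dp p ↥K = dp p (↥H ⧸ M) := by
      set f : ↥H →* (G ⧸ N) := (QuotientGroup.mk' N).comp H.subtype with hfdef
      have hker : f.ker = M := by
        rw [hfdef, ← MonoidHom.comap_ker, QuotientGroup.ker_mk']
        rfl
      have hrange : f.range = K := by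
        rw [hfdef, MonoidHom.range_comp, Subgroup.range_subtype, hHdef,
          Subgroup.map_comap_eq_self_of_surjective (QuotientGroup.mk'_surjective N)]
      have e0 : ↥H ⧸ f.ker ≃* ↥K := by
        refine (QuotientGroup.quotientKerEquivRange f).trans ?_
        exact MulEquiv.subgroupCongr hrange
      have e1 : ↥H ⧸ M ≃* ↥K := by
        refine (MulEquiv.trans ?_ e0)
        exact QuotientGroup.quotientMulEquivOfEq hker.symm
      exact (dp_eq_of_mulEquiv p e1).symm
    have hcore := dp_core hp k n x H hHi hNH
    have hG : sInf {r : ℝ | ∃ H : Subgroup G, H.Normal ∧ (∃ j : ℕ, H.index = p ^ j) ∧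
        r = ((dp p H : ℝ) - 1) / (H.index : ℝ)} ≤ ((dp p ↥H : ℝ) - 1) / (H.index : ℝ) :=
      csInf_le hbdd ⟨H, hHn, ⟨n, hHi⟩, rfl⟩
    have hpk : (0:ℝ) < (p:ℝ) ^ k := pow_pos hp0 k
    have hpn : (0:ℝ) < (p:ℝ) ^ n := pow_pos hp0 n
    rw [hHi] at hG
    rw [hKi, hdpK]
    push_cast at hG ⊢
    have hcore' : (dp p ↥H : ℝ) ≤ (dp p (↥H ⧸ M) : ℝ) + (p:ℝ) ^ n / (p:ℝ) ^ k := hcore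
    have hstep : ((dp p ↥H : ℝ) - 1) / (p:ℝ) ^ n
        ≤ ((dp p (↥H ⧸ M) : ℝ) - 1) / (p:ℝ) ^ n + 1 / (p:ℝ) ^ k := by
      have h1 : ((dp p ↥H : ℝ) - 1) / (p:ℝ) ^ n
          ≤ (((dp p (↥H ⧸ M) : ℝ) - 1) + (p:ℝ) ^ n / (p:ℝ) ^ k) / (p:ℝ) ^ n :=
        (div_le_div_iff_of_pos_right hpn).mpr (by linarith)
      have h2 : (p:ℝ) ^ n / (p:ℝ) ^ k / (p:ℝ) ^ n = 1 / (p:ℝ) ^ k := by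
        field_simp
      calc ((dp p ↥H : ℝ) - 1) / (p:ℝ) ^ n
          ≤ (((dp p (↥H ⧸ M) : ℝ) - 1) + (p:ℝ) ^ n / (p:ℝ) ^ k) / (p:ℝ) ^ n := h1
        _ = ((dp p (↥H ⧸ M) : ℝ) - 1) / (p:ℝ) ^ n + 1 / (p:ℝ) ^ k := by
            rw [add_div, h2]
    linarith
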